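/- Let G be a group with a symmetric generating set S, let N be a nontrivial normal subgroup, π : G → G/N the quotient map, and α = min{l_S(y) : y ∈ N, y ≠ e}. Let r, R ≥ 0 with 4(R + r) < α, let g₀ ∈ G, let a : G → ℂ be finitely supported with supp a ⊆ {g : l_S(g) ≤ r}, and let φ : G/N → ℂ be finitely supported with supp φ contained in the set {x ∈ G/N : ∃ h ∈ G, π(h) = x and l_S(h·g₀⁻¹) ≤ R}. Define φ' : G → ℂ by φ'(h) = φ(π(h)) if l_S(h·g₀⁻¹) ≤ R + r and φ'(h) = 0 otherwise. Then ∑_{h∈G} |φ'(h)|² = ∑_{x∈G/N} |φ(x)|², and ∑_{h∈G} |(λ_G(a)φ')(h)|² = ∑_{x∈G/N} |(λ_{G/N}(a)φ)(x)|², where (λ_G(a)ψ)(h) = ∑_{g∈G} a(g)·ψ(g⁻¹h) and (λ_{G/N}(a)φ)(x) = ∑_{g∈G} a(g)·φ(π(g)⁻¹·x). -/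

import Mathlib

/-- The word length of `g` with respect to a generating set `S`: the least `n`
such that `g` is a product of `n` elements of `S`. -/
noncomputable def wordLength {G : Type*} [Group G] (S : Set G) (g : G) : ℕ :=
  sInf {n : ℕ | ∃ l : List G, l.length = n ∧ (∀ x ∈ l, x ∈ S) ∧ l.prod = g}

section Aux

variable {G : Type*} [Group G] {S : Set G}

lemma wl_exists_list (hsym : S⁻¹ = S) (hgen : Subgroup.closure S = ⊤) (g : G) :
    ∃ l : List G, (∀ x ∈ l, x ∈ S) ∧ l.prod = g := by
  have hg : g ∈ (Subgroup.closure S).toSubmonoid := by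
    rw [hgen]; exact Subgroup.mem_top g
  rw [Subgroup.closure_toSubmonoid, hsym, Set.union_self] at hg
  exact Submonoid.exists_list_of_mem_closure hg

lemma wl_le {g : G} {l : List G} (hl : ∀ x ∈ l, x ∈ S) (hp : l.prod = g) :
    wordLength S g ≤ l.length :=
  Nat.sInf_le ⟨l, rfl, hl, hp⟩

lemma wl_spec (hsym : S⁻¹ = S) (hgen : Subgroup.closure S = ⊤) (g : G) :
    ∃ l : List G, l.length = wordLength S g ∧ (∀ x ∈ l, x ∈ S) ∧ l.prod = g := by
  have hne : {n : ℕ | ∃ l : List G, l.length = n ∧ (∀ x ∈ l, x ∈ S) ∧ l.prod = g}.Nonempty := by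
    obtain ⟨l, hl, hp⟩ := wl_exists_list hsym hgen g
    exact ⟨l.length, l, rfl, hl, hp⟩
  exact Nat.sInf_mem hne

lemma wl_mul (hsym : S⁻¹ = S) (hgen : Subgroup.closure S = ⊤) (g h : G) :
    wordLength S (g * h) ≤ wordLength S g + wordLength S h := by
  obtain ⟨l₁, hlen₁, hl₁, hp₁⟩ := wl_spec hsym hgen g
  obtain ⟨l₂, hlen₂, hl₂, hp₂⟩ := wl_spec hsym hgen h
  have := wl_le (l := l₁ ++ l₂) (g := g * h)
    (fun x hx => by rcases List.mem_append.mp hx with h | h; exacts [hl₁ x h, hl₂ x h])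
    (by rw [List.prod_append, hp₁, hp₂])
  simpa [hlen₁, hlen₂] using this

lemma wl_inv (hsym : S⁻¹ = S) (hgen : Subgroup.closure S = ⊤) (g : G) :
    wordLength S g⁻¹ ≤ wordLength S g := by
  obtain ⟨l, hlen, hl, hp⟩ := wl_spec hsym hgen g
  have hmem : ∀ x ∈ (l.map Inv.inv).reverse, x ∈ S := by
    intro x hx
    rw [List.mem_reverse, List.mem_map] at hx
    obtain ⟨y, hy, rfl⟩ := hx
    rw [← hsym]
    exact Set.inv_mem_inv.mpr (hl y hy)
  have hprod : (l.map Inv.inv).reverse.prod = g⁻¹ := by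
    rw [← List.prod_inv_reverse, hp]
  have := wl_le hmem hprod
  simpa [hlen] using this

end Aux

/-- Under 4(R + r) < α, lifting a function φ on G/N supported in a
ball of radius R around π(g₀) to the ball of radius R + r around g₀ preserves
the l² norm and the l² norm of the image under λ(a), for a supported in the
ball of radius r. -/
theorem stmt_11 {G : Type*} [Group G] (S : Set G)
    (hsym : S⁻¹ = S) (hgen : Subgroup.closure S = ⊤)
    (N : Subgroup G) [N.Normal] (hN : N ≠ ⊥) (α r R : ℕ)
    (hα : α = sInf {m : ℕ | ∃ y : G, y ∈ N ∧ y ≠ 1 ∧ wordLength S y = m})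
    (hRr : 4 * (R + r) < α) (g₀ : G)
    (a : G → ℂ) (ha : (Function.support a).Finite)
    (har : Function.support a ⊆ {g : G | wordLength S g ≤ r})
    (φ : G ⧸ N → ℂ) (hφ : (Function.support φ).Finite)
    (hφR : Function.support φ ⊆
      {x : G ⧸ N | ∃ h : G, QuotientGroup.mk' N h = x ∧ wordLength S (h * g₀⁻¹) ≤ R})
    (φ' : G → ℂ)
    (hφ' : ∀ h : G, φ' h =
      if wordLength S (h * g₀⁻¹) ≤ R + r then φ (QuotientGroup.mk' N h) else 0) :
    (∑ᶠ h : G, ‖φ' h‖ ^ 2 = ∑ᶠ x : G ⧸ N, ‖φ x‖ ^ 2) ∧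
    (∑ᶠ h : G, ‖∑ᶠ g : G, a g * φ' (g⁻¹ * h)‖ ^ 2 =
      ∑ᶠ x : G ⧸ N, ‖∑ᶠ g : G, a g * φ ((QuotientGroup.mk' N g)⁻¹ * x)‖ ^ 2) := by
  set π : G →* G ⧸ N := QuotientGroup.mk' N with hπ
  -- α is a lower bound for word lengths of nontrivial elements of N
  have hαle : ∀ y : G, y ∈ N → y ≠ 1 → α ≤ wordLength S y := by
    intro y hy hy1
    rw [hα]
    exact Nat.sInf_le ⟨y, hy, hy1, rfl⟩
  -- injectivity of π on the ball of radius 2(R+r) around g₀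
  have hinj : ∀ h₁ h₂ : G, wordLength S (h₁ * g₀⁻¹) ≤ 2 * (R + r) →
      wordLength S (h₂ * g₀⁻¹) ≤ 2 * (R + r) → π h₁ = π h₂ → h₁ = h₂ := by
    intro h₁ h₂ hb₁ hb₂ heq
    have hmem : h₁⁻¹ * h₂ ∈ N := QuotientGroup.eq.mp heq
    have hmem2 : h₁ * h₂⁻¹ ∈ N := by
      have h' := (Subgroup.Normal.mem_comm_iff ‹N.Normal›).mp hmem
      simpa using N.inv_mem h'
    by_contra hne
    have hne1 : h₁ * h₂⁻¹ ≠ 1 := fun h => hne (mul_inv_eq_one.mp h)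
    have h1 : α ≤ wordLength S (h₁ * h₂⁻¹) := hαle _ hmem2 hne1
    have h2 : wordLength S (h₁ * h₂⁻¹) ≤ 4 * (R + r) := by
      have heqprod : h₁ * h₂⁻¹ = (h₁ * g₀⁻¹) * (h₂ * g₀⁻¹)⁻¹ := by group
      rw [heqprod]
      calc wordLength S ((h₁ * g₀⁻¹) * (h₂ * g₀⁻¹)⁻¹)
          ≤ wordLength S (h₁ * g₀⁻¹) + wordLength S (h₂ * g₀⁻¹)⁻¹ := wl_mul hsym hgen _ _
        _ ≤ wordLength S (h₁ * g₀⁻¹) + wordLength S (h₂ * g₀⁻¹) := by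
            exact Nat.add_le_add_left (wl_inv hsym hgen _) _
        _ ≤ 2 * (R + r) + 2 * (R + r) := Nat.add_le_add hb₁ hb₂
        _ = 4 * (R + r) := by ring
    omega
  -- support description of φ'
  have hφ'supp : ∀ h : G, φ' h ≠ 0 →
      wordLength S (h * g₀⁻¹) ≤ R + r ∧ φ (π h) ≠ 0 := by
    intro h hne
    rw [hφ' h] at hne
    by_cases hc : wordLength S (h * g₀⁻¹) ≤ R + r
    · rw [if_pos hc] at hne; exact ⟨hc, hne⟩
    · rw [if_neg hc] at hne; exact absurd rfl hne
  constructor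
  · -- first equality
    have hs1 : Function.support (fun h : G => ‖φ' h‖ ^ 2) = Function.support φ' := by
      ext h; simp [Function.mem_support, pow_eq_zero_iff, map_eq_zero]
    have hs2 : Function.support (fun x : G ⧸ N => ‖φ x‖ ^ 2) = Function.support φ := by
      ext x; simp [Function.mem_support, pow_eq_zero_iff, map_eq_zero]
    have hbij : Set.BijOn π (Function.support φ') (Function.support φ) := by
      refine ⟨?_, ?_, ?_⟩
      · intro h hh
        exact (hφ'supp h hh).2
      · intro h₁ hh₁ h₂ hh₂ heq
        have hb₁ := (hφ'supp h₁ hh₁).1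
        have hb₂ := (hφ'supp h₂ hh₂).1
        exact hinj h₁ h₂ (hb₁.trans (by omega)) (hb₂.trans (by omega)) heq
      · intro x hx
        obtain ⟨h, hπh, hhR⟩ := hφR hx
        refine ⟨h, ?_, hπh⟩
        rw [Function.mem_support, hφ' h, if_pos (hhR.trans (by omega)), hπh]
        exact hx
    calc ∑ᶠ h : G, ‖φ' h‖ ^ 2
        = ∑ᶠ h ∈ Function.support φ', ‖φ' h‖ ^ 2 := by
          rw [← finsum_mem_univ, ← finsum_mem_inter_support, Set.univ_inter, hs1]
      _ = ∑ᶠ x ∈ Function.support φ, ‖φ x‖ ^ 2 := by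
          refine finsum_mem_eq_of_bijOn π hbij ?_
          intro h hh
          have heq : φ' h = φ (π h) := by
            rw [hφ' h, if_pos (hφ'supp h hh).1]
          rw [heq]
      _ = ∑ᶠ x : G ⧸ N, ‖φ x‖ ^ 2 := by
          have h2 : ∑ᶠ x : G ⧸ N, ‖φ x‖ ^ 2
              = ∑ᶠ x ∈ Function.support φ, ‖φ x‖ ^ 2 := by
            rw [← finsum_mem_univ, ← finsum_mem_inter_support, Set.univ_inter, hs2]
          exact h2.symm
  · -- second equality
    set F : G → ℂ := fun h => ∑ᶠ g : G, a g * φ' (g⁻¹ * h) with hF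
    set Φ : G ⧸ N → ℂ := fun x => ∑ᶠ g : G, a g * φ ((π g)⁻¹ * x) with hΦ
    -- key: F h = Φ (π h) on the ball of radius 2(R+r)
    have hkey : ∀ h : G, wordLength S (h * g₀⁻¹) ≤ 2 * (R + r) → F h = Φ (π h) := by
      intro h hh
      refine finsum_congr fun g => ?_
      by_cases hag : a g = 0
      · simp [hag]
      have hgr : wordLength S g ≤ r := har hag
      have hπeq : (π g)⁻¹ * π h = π (g⁻¹ * h) := by
        rw [map_mul, map_inv]
      rw [hπeq, hφ' (g⁻¹ * h)]
      by_cases hc : wordLength S (g⁻¹ * h * g₀⁻¹) ≤ R + r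
      · rw [if_pos hc]
      · rw [if_neg hc]
        suffices hz : φ (π (g⁻¹ * h)) = 0 by rw [hz]
        by_contra hnz
        obtain ⟨h', hπh', hh'R⟩ := hφR hnz
        -- z = (g⁻¹ * h) * h'⁻¹ ∈ N
        have hmem : (g⁻¹ * h)⁻¹ * h' ∈ N := QuotientGroup.eq.mp hπh'.symm
        have hmem2 : (g⁻¹ * h) * h'⁻¹ ∈ N := by
          have := (Subgroup.Normal.mem_comm_iff ‹N.Normal›).mp hmem
          simpa using N.inv_mem this
        have hzne : (g⁻¹ * h) * h'⁻¹ ≠ 1 := by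
          intro hz1
          have : g⁻¹ * h = h' := by
            have := mul_inv_eq_one.mp hz1; exact this
          rw [this] at hc
          exact hc (hh'R.trans (by omega))
        have h1 : α ≤ wordLength S ((g⁻¹ * h) * h'⁻¹) := hαle _ hmem2 hzne
        have h2 : wordLength S ((g⁻¹ * h) * h'⁻¹) ≤ r + 2 * (R + r) + R := by
          have heqprod : (g⁻¹ * h) * h'⁻¹ = (g⁻¹ * (h * g₀⁻¹)) * (h' * g₀⁻¹)⁻¹ := by group
          rw [heqprod]
          calc wordLength S ((g⁻¹ * (h * g₀⁻¹)) * (h' * g₀⁻¹)⁻¹)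
              ≤ wordLength S (g⁻¹ * (h * g₀⁻¹)) + wordLength S (h' * g₀⁻¹)⁻¹ :=
                wl_mul hsym hgen _ _
            _ ≤ (wordLength S g⁻¹ + wordLength S (h * g₀⁻¹)) + wordLength S (h' * g₀⁻¹) :=
                Nat.add_le_add (wl_mul hsym hgen _ _) (wl_inv hsym hgen _)
            _ ≤ (r + 2 * (R + r)) + R := by
                have := wl_inv hsym hgen g
                exact Nat.add_le_add (Nat.add_le_add (this.trans hgr) hh) hh'R
        omega
    -- support of F is inside the ball of radius 2(R+r)
    have hFsupp : ∀ h : G, F h ≠ 0 → wordLength S (h * g₀⁻¹) ≤ 2 * (R + r) := by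
      intro h hne
      by_contra hc
      apply hne
      refine finsum_eq_zero_of_forall_eq_zero fun g => ?_
      by_cases hag : a g = 0
      · simp [hag]
      have hgr : wordLength S g ≤ r := har hag
      suffices hz : φ' (g⁻¹ * h) = 0 by rw [hz, mul_zero]
      rw [hφ' (g⁻¹ * h)]
      rw [if_neg]
      intro hcc
      apply hc
      have heqprod : h * g₀⁻¹ = g * (g⁻¹ * h * g₀⁻¹) := by group
      rw [heqprod]
      calc wordLength S (g * (g⁻¹ * h * g₀⁻¹))
          ≤ wordLength S g + wordLength S (g⁻¹ * h * g₀⁻¹) := wl_mul hsym hgen _ _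
        _ ≤ r + (R + r) := Nat.add_le_add hgr hcc
        _ ≤ 2 * (R + r) := by omega
    -- every x in the support of Φ has a preimage in the ball
    have hΦsupp : ∀ x : G ⧸ N, Φ x ≠ 0 →
        ∃ h : G, π h = x ∧ wordLength S (h * g₀⁻¹) ≤ 2 * (R + r) := by
      intro x hne
      have : ∃ g : G, a g * φ ((π g)⁻¹ * x) ≠ 0 := by
        by_contra hall
        push_neg at hall
        exact hne (finsum_eq_zero_of_forall_eq_zero hall)
      obtain ⟨g, hg⟩ := this
      have hag : a g ≠ 0 := fun h0 => hg (by rw [h0, zero_mul])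
      have hφg : φ ((π g)⁻¹ * x) ≠ 0 := fun h0 => hg (by rw [h0, mul_zero])
      have hgr : wordLength S g ≤ r := har hag
      obtain ⟨h', hπh', hh'R⟩ := hφR hφg
      refine ⟨g * h', ?_, ?_⟩
      · rw [map_mul, hπh', mul_inv_cancel_left]
      · have heqprod : g * h' * g₀⁻¹ = g * (h' * g₀⁻¹) := by group
        rw [heqprod]
        calc wordLength S (g * (h' * g₀⁻¹))
            ≤ wordLength S g + wordLength S (h' * g₀⁻¹) := wl_mul hsym hgen _ _
          _ ≤ r + R := Nat.add_le_add hgr hh'R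
          _ ≤ 2 * (R + r) := by omega
    have hs1 : Function.support (fun h : G => ‖F h‖ ^ 2) = Function.support F := by
      ext h; simp [Function.mem_support, pow_eq_zero_iff, map_eq_zero]
    have hs2 : Function.support (fun x : G ⧸ N => ‖Φ x‖ ^ 2)
        = Function.support Φ := by
      ext x; simp [Function.mem_support, pow_eq_zero_iff, map_eq_zero]
    have hbij : Set.BijOn π (Function.support F) (Function.support Φ) := by
      refine ⟨?_, ?_, ?_⟩
      · intro h hh
        have hball := hFsupp h hh
        rw [Function.mem_support, ← hkey h hball]
        exact hh
      · intro h₁ hh₁ h₂ hh₂ heq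
        exact hinj h₁ h₂ (hFsupp h₁ hh₁) (hFsupp h₂ hh₂) heq
      · intro x hx
        obtain ⟨h, hπh, hball⟩ := hΦsupp x hx
        refine ⟨h, ?_, hπh⟩
        rw [Function.mem_support, hkey h hball, hπh]
        exact hx
    calc ∑ᶠ h : G, ‖F h‖ ^ 2
        = ∑ᶠ h ∈ Function.support F, ‖F h‖ ^ 2 := by
          rw [← finsum_mem_univ, ← finsum_mem_inter_support, Set.univ_inter, hs1]
      _ = ∑ᶠ x ∈ Function.support Φ, ‖Φ x‖ ^ 2 := by
          refine finsum_mem_eq_of_bijOn π hbij ?_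
          intro h hh
          rw [hkey h (hFsupp h hh)]
      _ = ∑ᶠ x : G ⧸ N, ‖Φ x‖ ^ 2 := by
          have h2 : ∑ᶠ x : G ⧸ N, ‖Φ x‖ ^ 2
              = ∑ᶠ x ∈ Function.support Φ, ‖Φ x‖ ^ 2 := by
            rw [← finsum_mem_univ, ← finsum_mem_inter_support, Set.univ_inter, hs2]
          exact h2.symm
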